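/- Let Ξ := Σ_{i=1}^n ‖N_i‖ and consider a control u with ‖u‖_{L²((0,∞),(ℝⁿ,‖·‖_∞))} < √(2ν)/(MΞ). Then the Volterra series ζ(t) := Σ_{m=0}^∞ ζ_m(t), defined recursively by ζ₀(t) := T(t)φ₀, ζ₁(t) := ∫₀ᵗ T(t−s)(Σ_{i=1}^n u_i(s) N_i ζ₀(s) + Bu(s)) ds, and ζ_k(t) := ∫₀ᵗ T(t−s) Σ_{i=1}^n u_i(s) N_i ζ_{k−1}(s) ds for k ≥ 2, converges uniformly on (0,∞), and ζ equals the mild solution of the bilinear evolution equation, i.e. ζ(t) = T(t)φ₀ + ∫₀ᵗ T(t−s)(Σ_{i=1}^n u_i(s) N_i ζ(s) + Bu(s)) ds. -/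

import Mathlib

open MeasureTheory ContinuousLinearMap Filter
open scoped ENNReal NNReal Topology RealInnerProductSpace

noncomputable section

/-- The open positive orthant `(0,∞)^m`. -/
def posOrthant (m : ℕ) : Set (Fin m → ℝ) := {t | ∀ i, 0 < t i}

/-- Lebesgue measure restricted to the positive orthant. -/
def orthantMeasure (m : ℕ) : Measure (Fin m → ℝ) := volume.restrict (posOrthant m)

/-- Hilbert-space model of the tensor product `H ⊗ (ℝⁿ)^{⊗ k}`:
functions from multi-indices to `H`, with the `ℓ²` norm. -/
abbrev Tens (H : Type*) [NormedAddCommGroup H] [InnerProductSpace ℝ H] (n k : ℕ) :=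
  PiLp 2 (fun _ : Fin k → Fin n => H)

instance Tens.instCompleteSpace {H : Type*} [NormedAddCommGroup H] [InnerProductSpace ℝ H]
    [CompleteSpace H] (n k : ℕ) : CompleteSpace (Tens H n k) :=
  inferInstance

section norms

variable {X Y : Type*} [NormedAddCommGroup X] [InnerProductSpace ℝ X]
  [NormedAddCommGroup Y] [InnerProductSpace ℝ Y]

/-- Trace (nuclear) norm of an operator between real inner-product spaces: the supremum
over finite orthonormal systems `(e_i)`, `(f_i)` of `∑ i |⟨f_i, T e_i⟩|`. -/
def traceNorm (T : X →L[ℝ] Y) : ℝ≥0∞ :=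
  ⨆ (m : ℕ) (e : {e : Fin m → X // Orthonormal ℝ e}) (f : {f : Fin m → Y // Orthonormal ℝ f}),
    ∑ i, (‖(inner ℝ (f.1 i) (T (e.1 i)) : ℝ)‖₊ : ℝ≥0∞)

/-- Square of the Hilbert–Schmidt norm, as a supremum over finite orthonormal systems. -/
def hsNormSq (T : X →L[ℝ] Y) : ℝ≥0∞ :=
  ⨆ (m : ℕ) (e : {e : Fin m → X // Orthonormal ℝ e}), ∑ i, (‖T (e.1 i)‖₊ : ℝ≥0∞) ^ 2

/-- Hilbert–Schmidt norm. -/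
def hsNorm (T : X →L[ℝ] Y) : ℝ≥0∞ := hsNormSq T ^ (1 / 2 : ℝ)

/-- A bounded operator is trace class if its trace norm is finite. -/
def IsTraceClass (T : X →L[ℝ] Y) : Prop := traceNorm T < ⊤

/-- A bounded operator is Hilbert–Schmidt if its Hilbert–Schmidt norm is finite. -/
def IsHilbertSchmidt (T : X →L[ℝ] Y) : Prop := hsNormSq T < ⊤

/-- The `i`-th singular value of an operator between Hilbert spaces, defined as its `i`-th
approximation number (the distance, in operator norm, to operators of rank at most `i`). -/
def singularValue (i : ℕ) (T : X →L[ℝ] Y) : ℝ :=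
  ⨅ S : {S : X →L[ℝ] Y // Module.rank ℝ (LinearMap.range (S : X →ₗ[ℝ] Y)) ≤ i}, ‖T - S.1‖

end norms

section system

variable {X H : Type*} [NormedAddCommGroup X] [InnerProductSpace ℝ X] [CompleteSpace X]
  [NormedAddCommGroup H] [InnerProductSpace ℝ H] [CompleteSpace H] {n : ℕ}

/-- An exponentially stable `C₀`-semigroup satisfying `‖T(t)‖ ≤ M e^{-ν t}`. -/
def IsC0SemigroupWith (T : ℝ → X →L[ℝ] X) (M ν : ℝ) : Prop :=
  1 ≤ M ∧ 0 < ν ∧ T 0 = 1 ∧ (∀ s t : ℝ, 0 ≤ s → 0 ≤ t → T (s + t) = T s * T t) ∧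
    (∀ x : X, ContinuousOn (fun t => T t x) (Set.Ici (0 : ℝ))) ∧
    (∀ t : ℝ, 0 ≤ t → ‖T t‖ ≤ M * Real.exp (-ν * t))

/-- `Γ² = ∑ᵢ ‖Nᵢ Nᵢ^*‖`. -/
def gammaSq (N : Fin n → X →L[ℝ] X) : ℝ := ∑ i, ‖N i * adjoint (N i)‖

/-- The stability condition `M² Γ² (2ν)⁻¹ < 1`. -/
def StabilityCond (N : Fin n → X →L[ℝ] X) (M ν : ℝ) : Prop :=
  M ^ 2 * gammaSq N / (2 * ν) < 1

/-- The operator chain `T(t₀) N_{α 0} T(t₁) ⋯ N_{α (k-1)} T(t_k)`. -/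
def Ochain (T : ℝ → X →L[ℝ] X) (N : Fin n → X →L[ℝ] X) {k : ℕ}
    (t : Fin (k + 1) → ℝ) (α : Fin k → Fin n) : X →L[ℝ] X :=
  T (t 0) * (List.ofFn fun l : Fin k => N (α l) * T (t l.succ)).prod

/-- The adjoint operator chain `T(t₀)^* N_{α 0}^* T(t₁)^* ⋯ N_{α (k-1)}^* T(t_k)^*`. -/
def Pchain (T : ℝ → X →L[ℝ] X) (N : Fin n → X →L[ℝ] X) {k : ℕ}
    (t : Fin (k + 1) → ℝ) (α : Fin k → Fin n) : X →L[ℝ] X :=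
  (List.ofFn fun l : Fin k => adjoint (T (t l.castSucc)) * adjoint (N (α l))).prod *
    adjoint (T (t (Fin.last k)))

/-- The kernel `O_k(t)` of the observability map: the component at the multi-index
`α = (n₁,…,n_k)` is `C T(t₀) N_{n₁} T(t₁) ⋯ N_{n_k} T(t_k)`. -/
def Ok (T : ℝ → X →L[ℝ] X) (N : Fin n → X →L[ℝ] X) (C : X →L[ℝ] H) (k : ℕ)
    (t : Fin (k + 1) → ℝ) : X →L[ℝ] Tens H n k :=
  (PiLp.continuousLinearEquiv 2 ℝ _).symm.toContinuousLinearMap.comp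
    (ContinuousLinearMap.pi fun α : Fin k → Fin n => C.comp (Ochain T N t α))

/-- The kernel `P_k(t)` of the reachability map: the component at the multi-index
`α = (n₁,…,n_k)` is `T(t₀)^* N_{n₁}^* T(t₁)^* ⋯ N_{n_k}^* T(t_k)^*`. -/
def Pk (T : ℝ → X →L[ℝ] X) (N : Fin n → X →L[ℝ] X) (k : ℕ)
    (t : Fin (k + 1) → ℝ) : X →L[ℝ] Tens X n k :=
  (PiLp.continuousLinearEquiv 2 ℝ _).symm.toContinuousLinearMap.comp
    (ContinuousLinearMap.pi fun α : Fin k → Fin n => Pchain T N t α)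

/-- `B ⊗ id_{(ℝⁿ)^{⊗k}}` in the tensor model. -/
def tensMap {E F : Type*} [NormedAddCommGroup E] [InnerProductSpace ℝ E]
    [NormedAddCommGroup F] [InnerProductSpace ℝ F] (B : E →L[ℝ] F) (n k : ℕ) :
    Tens E n k →L[ℝ] Tens F n k :=
  (PiLp.continuousLinearEquiv 2 ℝ _).symm.toContinuousLinearMap.comp
    ((ContinuousLinearMap.pi fun α : Fin k → Fin n =>
      B.comp (ContinuousLinearMap.proj α)).comp
        (PiLp.continuousLinearEquiv 2 ℝ _).toContinuousLinearMap)

/-- The control operator `B : ℝⁿ → X`, `Bu = ∑ᵢ uᵢ ψᵢ`. -/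
def Bop (ψ : Fin n → X) : EuclideanSpace ℝ (Fin n) →L[ℝ] X :=
  LinearMap.toContinuousLinearMap
    { toFun := fun u => ∑ i, u i • ψ i
      map_add' := by
        intro u v
        simp [add_smul, Finset.sum_add_distrib]
      map_smul' := by
        intro c u
        simp [smul_smul, Finset.smul_sum] }

/-- The fibre `F^n_{k+1}(H) = L²((0,∞)^{k+1}, H ⊗ (ℝⁿ)^{⊗k})` of the Fock space. -/
abbrev FockFiber (H : Type*) [NormedAddCommGroup H] [InnerProductSpace ℝ H] (n k : ℕ) :=
  MeasureTheory.Lp (α := Fin (k + 1) → ℝ) (Tens H n k) 2 (orthantMeasure (k + 1))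

/-- The Fock space `F^n(H) = ⊕_{k ≥ 0} F^n_{k+1}(H)` (Hilbert direct sum). -/
abbrev Fock (H : Type*) [NormedAddCommGroup H] [InnerProductSpace ℝ H] (n : ℕ) :=
  lp (fun k : ℕ => FockFiber H n k) 2

/-- `(W_k)` is the family of observability blocks: `W_k x = O_k(·) x` a.e. on the orthant. -/
def IsObsBlocks (T : ℝ → X →L[ℝ] X) (N : Fin n → X →L[ℝ] X) (C : X →L[ℝ] H)
    (Wk : ∀ k : ℕ, X →L[ℝ] FockFiber H n k) : Prop :=
  ∀ (k : ℕ) (x : X), ∀ᵐ t ∂(orthantMeasure (k + 1)),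
    (Wk k x : (Fin (k + 1) → ℝ) → Tens H n k) t = Ok T N C k t x

/-- `W` is the observability map assembled from the blocks `W_k`. -/
def IsObsMap (Wk : ∀ k : ℕ, X →L[ℝ] FockFiber H n k) (W : X →L[ℝ] Fock H n) : Prop :=
  ∀ (x : X) (k : ℕ), (W x : ∀ k, FockFiber H n k) k = Wk k x

/-- `(R_k)` is the family of reachability blocks: `R_k f = ∫ P_k(t)^* (B ⊗ id) f(t) dt`. -/
def IsReachBlocks (T : ℝ → X →L[ℝ] X) (N : Fin n → X →L[ℝ] X) (ψ : Fin n → X)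
    (Rk : ∀ k : ℕ, FockFiber (EuclideanSpace ℝ (Fin n)) n k →L[ℝ] X) : Prop :=
  ∀ (k : ℕ) (f : FockFiber (EuclideanSpace ℝ (Fin n)) n k),
    Rk k f = ∫ t, adjoint (Pk T N k t) (tensMap (Bop ψ) n k (f t)) ∂(orthantMeasure (k + 1))

/-- `R` is the reachability map assembled from the blocks `R_k`. -/
def IsReachMap (Rk : ∀ k : ℕ, FockFiber (EuclideanSpace ℝ (Fin n)) n k →L[ℝ] X)
    (R : Fock (EuclideanSpace ℝ (Fin n)) n →L[ℝ] X) : Prop :=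
  ∀ f : Fock (EuclideanSpace ℝ (Fin n)) n,
    R f = ∑' k : ℕ, Rk k ((f : ∀ k, FockFiber (EuclideanSpace ℝ (Fin n)) n k) k)

end system

section volterra

variable {X : Type*} [NormedAddCommGroup X] [InnerProductSpace ℝ X] [CompleteSpace X] {n : ℕ}

/-- The terms `ζ_m` of the Volterra series: `ζ₀(t) = T(t)φ₀`,
`ζ₁(t) = ∫₀ᵗ T(t−s)(∑ᵢ uᵢ(s) Nᵢ ζ₀(s) + Bu(s)) ds`, and
`ζ_k(t) = ∫₀ᵗ T(t−s) ∑ᵢ uᵢ(s) Nᵢ ζ_{k−1}(s) ds` for `k ≥ 2`. -/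
noncomputable def volterraTerm (T : ℝ → X →L[ℝ] X) (N : Fin n → X →L[ℝ] X) (ψ : Fin n → X)
    (u : ℝ → Fin n → ℝ) (φ₀ : X) : ℕ → ℝ → X
  | 0 => fun t => T t φ₀
  | 1 => fun t => ∫ s in Set.Ioc (0 : ℝ) t,
      T (t - s) ((∑ i, u s i • N i (volterraTerm T N ψ u φ₀ 0 s)) + ∑ i, u s i • ψ i)
  | (k + 2) => fun t => ∫ s in Set.Ioc (0 : ℝ) t,
      T (t - s) (∑ i, u s i • N i (volterraTerm T N ψ u φ₀ (k + 1) s))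

end volterra


private lemma aux_joint_cont {X : Type*} [NormedAddCommGroup X] [NormedSpace ℝ X]
    (S : ℝ → X →L[ℝ] X) (M : ℝ) (hb : ∀ τ, ‖S τ‖ ≤ M)
    (hc : ∀ x, Continuous fun τ => S τ x) :
    Continuous fun p : ℝ × X => S p.1 p.2 := by
  rw [continuous_iff_continuousAt]
  rintro ⟨τ₀, x₀⟩
  rw [ContinuousAt, tendsto_iff_norm_sub_tendsto_zero]
  have key : ∀ p : ℝ × X, ‖S p.1 p.2 - S τ₀ x₀‖ ≤ M * ‖p.2 - x₀‖ + ‖S p.1 x₀ - S τ₀ x₀‖ := by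
    intro p
    have h1 : S p.1 p.2 - S τ₀ x₀ = S p.1 (p.2 - x₀) + (S p.1 x₀ - S τ₀ x₀) := by
      rw [map_sub]; abel
    rw [h1]
    refine (norm_add_le _ _).trans (add_le_add_left ?_ _)
    exact ((S p.1).le_opNorm _).trans (mul_le_mul_of_nonneg_right (hb _) (norm_nonneg _))
  have hgc : Continuous fun p : ℝ × X => M * ‖p.2 - x₀‖ + ‖S p.1 x₀ - S τ₀ x₀‖ :=
    (continuous_const.mul ((continuous_snd.sub continuous_const).norm)).add
      ((((hc x₀).comp continuous_fst).sub continuous_const).norm)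
  have h0 : Tendsto (fun p : ℝ × X => M * ‖p.2 - x₀‖ + ‖S p.1 x₀ - S τ₀ x₀‖)
      (𝓝 (τ₀, x₀)) (𝓝 0) := by simpa using hgc.tendsto (τ₀, x₀)
  exact squeeze_zero (fun p => norm_nonneg _) key h0

private def volC (M Ξ Ψ q φn : ℝ) : ℕ → ℝ
  | 0 => M * φn
  | (m+1) => M * ((Ξ * volC M Ξ Ψ q φn m + if m = 0 then Ψ else 0) * q)

private lemma volC_nonneg {M Ξ Ψ q φn : ℝ} (hM : 0 ≤ M) (hΞ : 0 ≤ Ξ) (hΨ : 0 ≤ Ψ)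
    (hq : 0 ≤ q) (hφ : 0 ≤ φn) : ∀ m, 0 ≤ volC M Ξ Ψ q φn m := by
  intro m
  induction m with
  | zero => exact mul_nonneg hM hφ
  | succ k ih =>
      have : 0 ≤ (if k = 0 then Ψ else 0) := by split <;> simp [hΨ]
      exact mul_nonneg hM (mul_nonneg (add_nonneg (mul_nonneg hΞ ih) this) hq)

private lemma volC_succ_eq {M Ξ Ψ q φn : ℝ} (m : ℕ) :
    volC M Ξ Ψ q φn (m + 1) = (M * ((Ξ * (M * φn) + Ψ) * q)) * (M * Ξ * q) ^ m := by
  induction m with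
  | zero =>
      show M * ((Ξ * volC M Ξ Ψ q φn 0 + if (0:ℕ) = 0 then Ψ else 0) * q) = _
      show M * ((Ξ * (M * φn) + if (0:ℕ) = 0 then Ψ else 0) * q) = _
      rw [if_pos rfl, pow_zero, mul_one]
  | succ k ih =>
      have : volC M Ξ Ψ q φn (k + 2) = (M * Ξ * q) * volC M Ξ Ψ q φn (k + 1) := by
        show M * ((Ξ * volC M Ξ Ψ q φn (k+1) + if k + 1 = 0 then Ψ else 0) * q)
          = (M * Ξ * q) * volC M Ξ Ψ q φn (k + 1)
        simp only [Nat.succ_ne_zero, if_false]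
        ring
      rw [this, ih, pow_succ]; ring

private lemma volC_summable {M Ξ Ψ q φn : ℝ} (h0 : 0 ≤ M * Ξ * q) (h1 : M * Ξ * q < 1) :
    Summable (volC M Ξ Ψ q φn) := by
  have hgeo : Summable fun m : ℕ => (M * ((Ξ * (M * φn) + Ψ) * q)) * (M * Ξ * q) ^ m :=
    (summable_geometric_of_lt_one h0 h1).mul_left _
  have : Summable fun m : ℕ => volC M Ξ Ψ q φn (m + 1) := by
    simpa only [volC_succ_eq] using hgeo
  exact (summable_nat_add_iff 1).1 this

set_option maxHeartbeats 3000000 in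
/-- If `‖u‖_{L²((0,∞),(ℝⁿ,‖·‖_∞))} < √(2ν)/(MΞ)` with `Ξ = ∑ᵢ ‖Nᵢ‖`, then
the Volterra series `ζ(t) = ∑_m ζ_m(t)` converges uniformly on `(0,∞)` and equals the mild
solution of the bilinear evolution equation. -/
theorem volterra_series_representation
    {X : Type*} [NormedAddCommGroup X] [InnerProductSpace ℝ X] [CompleteSpace X]
    [TopologicalSpace.SeparableSpace X] {n : ℕ}
    (T : ℝ → X →L[ℝ] X) (N : Fin n → X →L[ℝ] X) (ψ : Fin n → X) (φ₀ : X)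
    (M ν : ℝ) (hT : IsC0SemigroupWith T M ν)
    (u : ℝ → Fin n → ℝ)
    (hu2 : MemLp u 2 (volume.restrict (Set.Ioi (0 : ℝ))))
    (husmall : eLpNorm u 2 (volume.restrict (Set.Ioi (0 : ℝ))) <
      ENNReal.ofReal (Real.sqrt (2 * ν) / (M * ∑ i, ‖N i‖))) :
    TendstoUniformlyOn
        (fun K t => ∑ m ∈ Finset.range K, volterraTerm T N ψ u φ₀ m t)
        (fun t => ∑' m : ℕ, volterraTerm T N ψ u φ₀ m t) atTop (Set.Ioi 0) ∧
    ∀ t : ℝ, 0 ≤ t →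
      (∑' m : ℕ, volterraTerm T N ψ u φ₀ m t) =
        T t φ₀ + ∫ s in Set.Ioc (0 : ℝ) t,
          T (t - s) ((∑ i, u s i • N i (∑' m : ℕ, volterraTerm T N ψ u φ₀ m s)) +
            ∑ i, u s i • ψ i) := by

  classical
  obtain ⟨hM, hν, hT0, hTadd, hTcont, hTbd⟩ := hT
  set μ : Measure ℝ := volume.restrict (Set.Ioi (0:ℝ)) with hμdef
  set ζ : ℕ → ℝ → X := volterraTerm T N ψ u φ₀ with hζdef
  set Ξ : ℝ := ∑ i, ‖N i‖ with hΞdef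
  set Ψ : ℝ := ∑ i, ‖ψ i‖ with hΨdef
  set ρ : ℝ := (eLpNorm u 2 μ).toReal with hρdef
  have hM0 : (0:ℝ) < M := lt_of_lt_of_le one_pos hM
  have hΞ0 : 0 ≤ Ξ := Finset.sum_nonneg fun i _ => norm_nonneg _
  have hΨ0 : 0 ≤ Ψ := Finset.sum_nonneg fun i _ => norm_nonneg _
  have h2ν : (0:ℝ) < 2 * ν := by linarith
  have hsq : (0:ℝ) < Real.sqrt (2*ν) := Real.sqrt_pos.2 h2ν
  have hρ0 : 0 ≤ ρ := ENNReal.toReal_nonneg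
  have hMΞ : 0 < M * Ξ := by
    rcases lt_or_eq_of_le (mul_nonneg hM0.le hΞ0) with h | h
    · exact h
    · exfalso
      rw [← h, div_zero, ENNReal.ofReal_zero] at husmall
      exact ENNReal.not_lt_zero husmall
  have hρlt : M * Ξ * ρ < Real.sqrt (2*ν) := by
    have h1 : ρ < Real.sqrt (2*ν) / (M*Ξ) := ENNReal.toReal_lt_of_lt_ofReal husmall
    calc M * Ξ * ρ < M * Ξ * (Real.sqrt (2*ν)/(M*Ξ)) := mul_lt_mul_of_pos_left h1 hMΞ
      _ = Real.sqrt (2*ν) := by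
        have hΞne : Ξ ≠ 0 := right_ne_zero_of_mul hMΞ.ne'
        field_simp
  set q : ℝ := ρ / Real.sqrt (2*ν) with hqdef
  have hq0 : 0 ≤ q := div_nonneg hρ0 hsq.le
  have hr0 : 0 ≤ M * Ξ * q := mul_nonneg hMΞ.le hq0
  have hr1 : M * Ξ * q < 1 := by
    rw [hqdef, mul_div_assoc']
    exact (div_lt_one hsq).2 hρlt
  set c : ℕ → ℝ := volC M Ξ Ψ q ‖φ₀‖ with hcdef
  have hc0 : ∀ m, 0 ≤ c m := volC_nonneg hM0.le hΞ0 hΨ0 hq0 (norm_nonneg _)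
  have hcsum : Summable c := volC_summable hr0 hr1
  set KK : ℕ → ℝ := fun m => Ξ * c m + (if m = 0 then Ψ else 0) with hKKdef
  have hKK0 : ∀ m, 0 ≤ KK m := by
    intro m
    rw [hKKdef]
    exact add_nonneg (mul_nonneg hΞ0 (hc0 m)) (by split <;> simp [hΨ0])
  have hcsucc : ∀ m, c (m+1) = M * (KK m * q) := by
    intro m
    rw [hcdef, hKKdef]
    rfl
  have hKKsum : Summable KK := by
    rw [hKKdef]
    exact (hcsum.mul_left Ξ).add
      (summable_of_ne_finset_zero (s := ({0} : Finset ℕ)) fun b hb => if_neg (by simpa using hb))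
  -- the extended semigroup
  set S : ℝ → X →L[ℝ] X := fun τ => T (max τ 0) with hSdef
  have hSb : ∀ τ, ‖S τ‖ ≤ M := by
    intro τ
    rw [hSdef]
    refine (hTbd _ (le_max_right _ _)).trans ?_
    have h1 : Real.exp (-ν * max τ 0) ≤ 1 := Real.exp_le_one_iff.2 (by
      have := le_max_right τ 0
      nlinarith [le_max_right τ 0])
    nlinarith
  have hScont : ∀ x, Continuous fun τ => S τ x := by
    intro x
    rw [hSdef]
    exact (hTcont x).comp_continuous (continuous_id.max continuous_const)
      (fun τ => Set.mem_Ici.mpr (le_max_right _ _))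
  have hSj : Continuous fun p : ℝ × X => S p.1 p.2 := aux_joint_cont S M hSb hScont
  have hST : ∀ t s : ℝ, s ≤ t → S (t - s) = T (t - s) := by
    intro t s h
    rw [hSdef]
    exact congrArg T (max_eq_left (sub_nonneg.2 h))
  -- facts about u
  have hU2 : MemLp (fun s => ‖u s‖) 2 μ := hu2.norm
  have hUmeas : AEStronglyMeasurable (fun s : ℝ => ‖u s‖) μ := hU2.1
  have hrestr : ∀ b : ℝ, μ.restrict (Set.Ioc 0 b) = volume.restrict (Set.Ioc 0 b) := by
    intro b
    rw [hμdef, Measure.restrict_restrict measurableSet_Ioc,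
      Set.inter_eq_self_of_subset_left Set.Ioc_subset_Ioi_self]
  have hUint : ∀ b : ℝ, Integrable (fun s => ‖u s‖) (volume.restrict (Set.Ioc (0:ℝ) b)) := by
    intro b
    have h1 : MemLp (fun s => ‖u s‖) 2 (volume.restrict (Set.Ioc (0:ℝ) b)) := by
      rw [← hrestr]; exact hU2.restrict _
    exact h1.integrable one_le_two
  -- the exponential integral
  have hexp_int : ∀ t : ℝ, 0 ≤ t →
      (∫ s in Set.Ioc (0:ℝ) t, Real.exp (-(2*ν)*(t-s))) ≤ (2*ν)⁻¹ := by
    intro t ht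
    have hderiv : ∀ s ∈ Set.uIcc (0:ℝ) t,
        HasDerivAt (fun s => (2*ν)⁻¹ * Real.exp (-(2*ν)*(t-s))) (Real.exp (-(2*ν)*(t-s))) s := by
      intro s _
      have h1 : HasDerivAt (fun s : ℝ => -(2*ν)*(t-s)) (2*ν) s := by
        have h0 := ((hasDerivAt_id s).const_sub t).const_mul (-(2*ν))
        simpa using h0
      have h2 := h1.exp
      have h3 := h2.const_mul ((2*ν)⁻¹)
      refine h3.congr_deriv ?_
      rw [mul_comm (Real.exp _), ← mul_assoc, inv_mul_cancel₀ h2ν.ne', one_mul]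
    have hci : Continuous fun s : ℝ => Real.exp (-(2*ν)*(t-s)) :=
      Real.continuous_exp.comp (continuous_const.mul (continuous_const.sub continuous_id))
    have hint : IntervalIntegrable (fun s => Real.exp (-(2*ν)*(t-s))) volume 0 t :=
      hci.intervalIntegrable _ _
    have heq := intervalIntegral.integral_eq_sub_of_hasDerivAt hderiv hint
    rw [← intervalIntegral.integral_of_le ht, heq]
    simp only [sub_self, mul_zero, Real.exp_zero, mul_one, sub_zero]
    nlinarith [Real.exp_pos (-(2*ν)*t), inv_pos.2 h2ν]
  -- the Cauchy-Schwarz estimate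
  have hCS : ∀ t : ℝ, 0 ≤ t →
      (∫ s in Set.Ioc (0:ℝ) t, Real.exp (-ν*(t-s)) * ‖u s‖) ≤ q := by
    intro t ht
    set μt : Measure ℝ := volume.restrict (Set.Ioc (0:ℝ) t) with hμt
    have hUm : AEStronglyMeasurable (fun s : ℝ => ‖u s‖) μt := by
      rw [hμt, ← hrestr]; exact hUmeas.restrict
    have hum : AEStronglyMeasurable u μt := by
      rw [hμt, ← hrestr]; exact hu2.1.restrict
    have hec : Continuous fun s : ℝ => Real.exp (-ν*(t-s)) :=
      Real.continuous_exp.comp (continuous_const.mul (continuous_const.sub continuous_id))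
    have hfg : AEStronglyMeasurable (fun s => Real.exp (-ν*(t-s)) * ‖u s‖) μt :=
      hec.aestronglyMeasurable.mul hUm
    have hnn : 0 ≤ᵐ[μt] fun s => Real.exp (-ν*(t-s)) * ‖u s‖ :=
      Eventually.of_forall fun s => mul_nonneg (Real.exp_pos _).le (norm_nonneg _)
    rw [integral_eq_lintegral_of_nonneg_ae hnn hfg]
    have hexp_factor :
        (∫⁻ s, (ENNReal.ofReal (Real.exp (-ν*(t-s))))^(2:ℝ) ∂μt) ^ (1/2 : ℝ)
          ≤ ENNReal.ofReal ((Real.sqrt (2*ν))⁻¹) := by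
      have h1 : ∀ s : ℝ, (ENNReal.ofReal (Real.exp (-ν*(t-s))))^(2:ℝ)
          = ENNReal.ofReal (Real.exp (-(2*ν)*(t-s))) := by
        intro s
        rw [ENNReal.ofReal_rpow_of_pos (Real.exp_pos _)]
        congr 1
        rw [Real.rpow_two, sq, ← Real.exp_add]
        ring_nf
      simp only [h1]
      have hci2 : Continuous fun s : ℝ => Real.exp (-(2*ν)*(t-s)) :=
        Real.continuous_exp.comp (continuous_const.mul (continuous_const.sub continuous_id))
      have hint2 : Integrable (fun s => Real.exp (-(2*ν)*(t-s))) μt := hci2.integrableOn_Ioc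
      have hnn2 : 0 ≤ᵐ[μt] fun s => Real.exp (-(2*ν)*(t-s)) :=
        Eventually.of_forall fun s => (Real.exp_pos _).le
      have h2 : (∫⁻ s, ENNReal.ofReal (Real.exp (-(2*ν)*(t-s))) ∂μt)
          = ENNReal.ofReal (∫ s, Real.exp (-(2*ν)*(t-s)) ∂μt) :=
        (ofReal_integral_eq_lintegral_ofReal hint2 hnn2).symm
      rw [h2]
      calc (ENNReal.ofReal (∫ s, Real.exp (-(2*ν)*(t-s)) ∂μt)) ^ (1/2:ℝ)
          ≤ (ENNReal.ofReal ((2*ν)⁻¹)) ^ (1/2:ℝ) :=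
            ENNReal.rpow_le_rpow (ENNReal.ofReal_le_ofReal (hexp_int t ht)) (by norm_num)
        _ = ENNReal.ofReal (((2*ν)⁻¹) ^ (1/2:ℝ)) := ENNReal.ofReal_rpow_of_pos (by positivity)
        _ = ENNReal.ofReal ((Real.sqrt (2*ν))⁻¹) := by
            rw [← Real.sqrt_eq_rpow, Real.sqrt_inv]
    have hu_factor : (∫⁻ s, ((‖u s‖₊ : ℝ≥0∞))^(2:ℝ) ∂μt) ^ (1/2:ℝ) ≤ eLpNorm u 2 μ := by
      rw [eLpNorm_eq_lintegral_rpow_enorm_toReal (p := 2) (by norm_num) (by norm_num)]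
      have htr : ((2:ℝ≥0∞)).toReal = (2:ℝ) := by norm_num
      rw [htr]
      refine ENNReal.rpow_le_rpow ?_ (by norm_num)
      refine lintegral_mono' ?_ (le_refl _)
      rw [hμt, hμdef]
      exact Measure.restrict_mono Set.Ioc_subset_Ioi_self le_rfl
    have hH := ENNReal.lintegral_mul_le_Lp_mul_Lq μt
      (Real.holderConjugate_iff.mpr ⟨one_lt_two, by norm_num⟩ : Real.HolderConjugate 2 2)
      (f := fun s => ENNReal.ofReal (Real.exp (-ν*(t-s))))
      (g := fun s => (‖u s‖₊ : ℝ≥0∞))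
      ((hec.measurable.ennreal_ofReal).aemeasurable) (hum.enorm)
    have hle : (∫⁻ s, ENNReal.ofReal (Real.exp (-ν*(t-s)) * ‖u s‖) ∂μt)
        ≤ ENNReal.ofReal ((Real.sqrt (2*ν))⁻¹) * eLpNorm u 2 μ := by
      have hid : ∀ s : ℝ, ENNReal.ofReal (Real.exp (-ν*(t-s)) * ‖u s‖)
          = ENNReal.ofReal (Real.exp (-ν*(t-s))) * (‖u s‖₊ : ℝ≥0∞) := by
        intro s
        rw [ENNReal.ofReal_mul (Real.exp_pos _).le, ofReal_norm, enorm_eq_nnnorm]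
      simp only [hid]
      refine le_trans (le_of_eq ?_) (hH.trans (mul_le_mul' ?_ ?_))
      · rfl
      · simpa using hexp_factor
      · simpa using hu_factor
    have hfin : ENNReal.ofReal ((Real.sqrt (2*ν))⁻¹) * eLpNorm u 2 μ ≠ ⊤ :=
      ENNReal.mul_ne_top ENNReal.ofReal_ne_top hu2.2.ne
    have hmono := ENNReal.toReal_mono hfin hle
    rw [ENNReal.toReal_mul, ENNReal.toReal_ofReal (by positivity)] at hmono
    refine hmono.trans (le_of_eq ?_)
    rw [hqdef, div_eq_inv_mul]
  -- source terms
  set G : ℕ → ℝ → X := fun m s =>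
    (∑ i, u s i • N i (ζ m s)) + (if m = 0 then ∑ i, u s i • ψ i else 0) with hGdef
  have hζsucc : ∀ m (t : ℝ), ζ (m+1) t = ∫ s in Set.Ioc (0:ℝ) t, T (t-s) (G m s) := by
    intro m t
    rcases m with _ | k
    · rw [hζdef, hGdef]
      show volterraTerm T N ψ u φ₀ 1 t = _
      simp only [volterraTerm, hζdef, if_pos rfl, if_true]
    · rw [hζdef, hGdef]
      show volterraTerm T N ψ u φ₀ (k+2) t = _
      simp only [volterraTerm, hζdef, Nat.succ_ne_zero, if_false, add_zero]
  have hGb : ∀ m (s : ℝ), ‖ζ m s‖ ≤ c m → ‖G m s‖ ≤ ‖u s‖ * KK m := by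
    intro m s hzm
    rw [hGdef, hKKdef]
    have hterm : ‖∑ i, u s i • N i (ζ m s)‖ ≤ ‖u s‖ * (Ξ * c m) := by
      refine (norm_sum_le _ _).trans ?_
      have hbd : ∀ i ∈ Finset.univ, ‖u s i • N i (ζ m s)‖ ≤ ‖u s‖ * (‖N i‖ * c m) := by
        intro i _
        rw [norm_smul]
        have h1 : ‖u s i‖ ≤ ‖u s‖ := norm_le_pi_norm (u s) i
        have h2 : ‖N i (ζ m s)‖ ≤ ‖N i‖ * c m :=
          ((N i).le_opNorm _).trans (mul_le_mul_of_nonneg_left hzm (norm_nonneg _))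
        exact mul_le_mul h1 h2 (norm_nonneg _) (norm_nonneg _)
      refine (Finset.sum_le_sum hbd).trans (le_of_eq ?_)
      rw [← Finset.mul_sum, ← Finset.sum_mul, hΞdef]
    have hterm2 : ‖if m = 0 then ∑ i, u s i • ψ i else 0‖
        ≤ ‖u s‖ * (if m = 0 then Ψ else 0) := by
      split
      · refine (norm_sum_le _ _).trans ?_
        have hbd : ∀ i ∈ Finset.univ, ‖u s i • ψ i‖ ≤ ‖u s‖ * ‖ψ i‖ := by
          intro i _
          rw [norm_smul]
          exact mul_le_mul_of_nonneg_right (norm_le_pi_norm (u s) i) (norm_nonneg _)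
        refine (Finset.sum_le_sum hbd).trans (le_of_eq ?_)
        rw [← Finset.mul_sum, hΨdef]
      · simp
    calc ‖(∑ i, u s i • N i (ζ m s)) + (if m = 0 then ∑ i, u s i • ψ i else 0)‖
        ≤ ‖∑ i, u s i • N i (ζ m s)‖ + ‖if m = 0 then ∑ i, u s i • ψ i else 0‖ :=
          norm_add_le _ _
      _ ≤ ‖u s‖ * (Ξ * c m) + ‖u s‖ * (if m = 0 then Ψ else 0) := add_le_add hterm hterm2
      _ = ‖u s‖ * (Ξ * c m + (if m = 0 then Ψ else 0)) := by ring
  have hGmeas : ∀ m, AEStronglyMeasurable (ζ m) μ → AEStronglyMeasurable (G m) μ := by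
    intro m hzm
    rw [hGdef]
    have hui : ∀ i : Fin n, AEStronglyMeasurable (fun s => u s i) μ :=
      fun i => (continuous_apply i).comp_aestronglyMeasurable hu2.1
    refine AEStronglyMeasurable.add ?_ ?_
    · refine Finset.aestronglyMeasurable_fun_sum _ fun i _ => ?_
      exact (hui i).smul ((N i).continuous.comp_aestronglyMeasurable hzm)
    · split
      · refine Finset.aestronglyMeasurable_fun_sum _ fun i _ => ?_
        exact (hui i).smul aestronglyMeasurable_const
      · exact aestronglyMeasurable_const
  have hFmeas : ∀ m (t : ℝ), AEStronglyMeasurable (G m) μ →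
      AEStronglyMeasurable (fun s => S (t - s) (G m s)) (volume.restrict (Set.Ioc (0:ℝ) t)) := by
    intro m t hGm
    have h1 : AEStronglyMeasurable (G m) (volume.restrict (Set.Ioc (0:ℝ) t)) := by
      rw [← hrestr]; exact hGm.restrict
    have h2 : AEStronglyMeasurable (fun s : ℝ => (t - s, G m s))
        (volume.restrict (Set.Ioc (0:ℝ) t)) :=
      ((continuous_const.sub continuous_id).aestronglyMeasurable).prodMk h1
    exact hSj.comp_aestronglyMeasurable h2
  -- the quantitative step
  have hstep : ∀ m (t : ℝ), 0 ≤ t →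
      (∀ s : ℝ, 0 ≤ s → ‖G m s‖ ≤ ‖u s‖ * KK m) → ‖ζ (m+1) t‖ ≤ c (m+1) := by
    intro m t ht hGb'
    rw [hζsucc m t]
    have hec : Continuous fun s : ℝ => Real.exp (-ν*(t-s)) :=
      Real.continuous_exp.comp (continuous_const.mul (continuous_const.sub continuous_id))
    have hbint0 : Integrable (fun s => Real.exp (-ν*(t-s)) * ‖u s‖)
        (volume.restrict (Set.Ioc (0:ℝ) t)) := by
      refine Integrable.mono' (hUint t) ?_ ?_
      · refine hec.aestronglyMeasurable.mul ?_
        rw [← hrestr]; exact hUmeas.restrict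
      · refine (ae_restrict_iff' measurableSet_Ioc).2 (Eventually.of_forall fun s hs => ?_)
        have h1 : Real.exp (-ν*(t-s)) ≤ 1 := Real.exp_le_one_iff.2 (by nlinarith [hs.2])
        have h2 : ‖Real.exp (-ν*(t-s)) * ‖u s‖‖ = Real.exp (-ν*(t-s)) * ‖u s‖ :=
          Real.norm_of_nonneg (mul_nonneg (Real.exp_pos _).le (norm_nonneg _))
        rw [h2]
        nlinarith [norm_nonneg (u s), Real.exp_pos (-ν*(t-s))]
    have hbint : Integrable (fun s => M * KK m * (Real.exp (-ν*(t-s)) * ‖u s‖))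
        (volume.restrict (Set.Ioc (0:ℝ) t)) := hbint0.const_mul _
    have hMK0 : 0 ≤ M * KK m := mul_nonneg hM0.le (hKK0 m)
    calc ‖∫ s in Set.Ioc (0:ℝ) t, T (t-s) (G m s)‖
        ≤ ∫ s in Set.Ioc (0:ℝ) t, M * KK m * (Real.exp (-ν*(t-s)) * ‖u s‖) := by
          refine norm_integral_le_of_norm_le hbint ?_
          refine (ae_restrict_iff' measurableSet_Ioc).2 (Eventually.of_forall fun s hs => ?_)
          obtain ⟨hs0, hst⟩ := hs
          have hTn : ‖T (t - s)‖ ≤ M * Real.exp (-ν*(t-s)) := hTbd _ (by linarith)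
          calc ‖T (t-s) (G m s)‖ ≤ ‖T (t-s)‖ * ‖G m s‖ := (T (t-s)).le_opNorm _
            _ ≤ (M * Real.exp (-ν*(t-s))) * (‖u s‖ * KK m) :=
                mul_le_mul hTn (hGb' s hs0.le) (norm_nonneg _)
                  (by positivity)
            _ = M * KK m * (Real.exp (-ν*(t-s)) * ‖u s‖) := by ring
      _ = M * KK m * ∫ s in Set.Ioc (0:ℝ) t, Real.exp (-ν*(t-s)) * ‖u s‖ :=
          integral_const_mul _ _
      _ ≤ M * KK m * q := mul_le_mul_of_nonneg_left (hCS t ht) hMK0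
      _ = c (m+1) := by rw [hcsucc]; ring
  -- continuity of the successor terms
  have hcont : ∀ m, AEStronglyMeasurable (G m) μ →
      (∀ s : ℝ, 0 ≤ s → ‖G m s‖ ≤ ‖u s‖ * KK m) → Continuous (ζ (m+1)) := by
    intro m hGm hGb'
    have hrepr : (ζ (m+1))
        = fun t => ∫ s, Set.indicator (Set.Ioc (0:ℝ) t) (fun s => S (t-s) (G m s)) s := by
      funext t
      rw [hζsucc m t, integral_indicator measurableSet_Ioc]
      exact setIntegral_congr_fun measurableSet_Ioc fun s hs => by rw [hST t s hs.2]
    rw [hrepr, continuous_iff_continuousAt]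
    intro t₀
    have hmem : ∀ᶠ t : ℝ in nhds t₀, t ∈ Set.Iio (t₀ + 1) :=
      isOpen_Iio.eventually_mem (by simp [lt_add_one])
    refine continuousAt_of_dominated
      (bound := fun s => Set.indicator (Set.Ioc (0:ℝ) (t₀+1)) (fun s => M * KK m * ‖u s‖) s)
      ?_ ?_ ?_ ?_
    · exact Eventually.of_forall fun t =>
        (aestronglyMeasurable_indicator_iff measurableSet_Ioc).2 (hFmeas m t hGm)
    · refine hmem.mono fun t htlt => Eventually.of_forall fun s => ?_
      show ‖Set.indicator (Set.Ioc (0:ℝ) t) (fun s => S (t-s) (G m s)) s‖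
        ≤ Set.indicator (Set.Ioc (0:ℝ) (t₀+1)) (fun s => M * KK m * ‖u s‖) s
      by_cases hs : s ∈ Set.Ioc (0:ℝ) t
      · rw [Set.indicator_of_mem hs]
        have hs' : s ∈ Set.Ioc (0:ℝ) (t₀+1) := ⟨hs.1, hs.2.trans (le_of_lt htlt)⟩
        rw [Set.indicator_of_mem hs']
        calc ‖S (t-s) (G m s)‖ ≤ ‖S (t-s)‖ * ‖G m s‖ := (S (t-s)).le_opNorm _
          _ ≤ M * (‖u s‖ * KK m) :=
              mul_le_mul (hSb _) (hGb' s hs.1.le) (norm_nonneg _) hM0.le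
          _ = M * KK m * ‖u s‖ := by ring
      · rw [Set.indicator_of_notMem hs, norm_zero]
        exact Set.indicator_nonneg
          (fun x _ => mul_nonneg (mul_nonneg hM0.le (hKK0 m)) (norm_nonneg _)) s
    · rw [integrable_indicator_iff measurableSet_Ioc]
      exact (hUint (t₀+1)).const_mul (M * KK m)
    · have hae : ∀ᵐ s : ℝ, s ∉ ({t₀} : Set ℝ) :=
        measure_eq_zero_iff_ae_notMem.1 (measure_singleton t₀)
      refine hae.mono fun s hs => ?_
      have hsne : s ≠ t₀ := by simpa using hs
      rcases le_or_gt s 0 with h0 | h0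
      · have hzero : (fun t : ℝ =>
            Set.indicator (Set.Ioc (0:ℝ) t) (fun s => S (t-s) (G m s)) s) = fun _ => 0 := by
          funext t
          exact Set.indicator_of_notMem (fun hmem => absurd hmem.1 (not_lt.2 h0)) _
        rw [hzero]
        exact continuousAt_const
      rcases lt_or_gt_of_ne hsne with hlt | hgt
      · have hev : ∀ᶠ t : ℝ in nhds t₀, t ∈ Set.Ioi s := isOpen_Ioi.eventually_mem hlt
        have hc1 : ContinuousAt (fun t : ℝ => S (t - s) (G m s)) t₀ := by
          have : Continuous fun t : ℝ => S (t - s) (G m s) :=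
            hSj.comp ((continuous_id.sub continuous_const).prodMk continuous_const)
          exact this.continuousAt
        refine hc1.congr ?_
        refine hev.mono fun t (htm : s < t) => ?_
        exact (Set.indicator_of_mem (Set.mem_Ioc.mpr ⟨h0, htm.le⟩) (fun s => S (t-s) (G m s))).symm
      · have hev : ∀ᶠ t : ℝ in nhds t₀, t ∈ Set.Iio s := isOpen_Iio.eventually_mem hgt
        have hcz : ContinuousAt (fun _ : ℝ => (0:X)) t₀ := continuousAt_const
        refine hcz.congr ?_
        refine hev.mono fun t (htm : t < s) => ?_
        exact (Set.indicator_of_notMem (fun hmem => absurd hmem.2 (not_le.2 htm)) (fun s => S (t-s) (G m s))).symm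
  -- the main induction
  have key : ∀ m, AEStronglyMeasurable (ζ m) μ ∧ ∀ t : ℝ, 0 ≤ t → ‖ζ m t‖ ≤ c m := by
    intro m
    induction m with
    | zero =>
        have hz0 : ζ 0 = fun t => T t φ₀ := by rw [hζdef]; rfl
        constructor
        · rw [hz0, hμdef]
          exact (((hTcont φ₀).mono Set.Ioi_subset_Ici_self)).aestronglyMeasurable
            measurableSet_Ioi
        · intro t htnn
          rw [hz0]
          have h1 : Real.exp (-ν*t) ≤ 1 := Real.exp_le_one_iff.2 (by nlinarith)
          calc ‖T t φ₀‖ ≤ ‖T t‖ * ‖φ₀‖ := (T t).le_opNorm _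
            _ ≤ (M * Real.exp (-ν*t)) * ‖φ₀‖ :=
                mul_le_mul_of_nonneg_right (hTbd t htnn) (norm_nonneg _)
            _ ≤ M * ‖φ₀‖ := by nlinarith [norm_nonneg φ₀, Real.exp_pos (-ν*t), h1, mul_nonneg hM0.le (norm_nonneg φ₀)]
            _ = c 0 := rfl
    | succ k ih =>
        have hGk : AEStronglyMeasurable (G k) μ := hGmeas k ih.1
        have hGbk : ∀ s : ℝ, 0 ≤ s → ‖G k s‖ ≤ ‖u s‖ * KK k :=
          fun s hs => hGb k s (ih.2 s hs)
        exact ⟨(hcont k hGk hGbk).aestronglyMeasurable, fun t ht => hstep k t ht hGbk⟩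
  have hbound : ∀ (m : ℕ) (x : ℝ), x ∈ Set.Ioi (0:ℝ) → ‖ζ m x‖ ≤ c m :=
    fun m x hx => (key m).2 x (le_of_lt hx)
  refine ⟨tendstoUniformlyOn_tsum_nat hcsum hbound, ?_⟩
  -- the mild solution property
  intro t ht
  have hsummab : ∀ s : ℝ, 0 ≤ s → Summable fun m => ζ m s :=
    fun s hs => Summable.of_norm_bounded hcsum fun m => (key m).2 s hs
  have hGmeasAll : ∀ m, AEStronglyMeasurable (G m) μ := fun m => hGmeas m (key m).1
  have hGball : ∀ m (s : ℝ), 0 ≤ s → ‖G m s‖ ≤ ‖u s‖ * KK m :=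
    fun m s hs => hGb m s ((key m).2 s hs)
  have hterm : ∀ m, ζ (m+1) t = ∫ s in Set.Ioc (0:ℝ) t, S (t-s) (G m s) := by
    intro m
    rw [hζsucc m t]
    exact setIntegral_congr_fun measurableSet_Ioc fun s hs => by rw [hST t s hs.2]
  have hswap : (∫ s in Set.Ioc (0:ℝ) t, ∑' m, S (t-s) (G m s))
      = ∑' m, ∫ s in Set.Ioc (0:ℝ) t, S (t-s) (G m s) := by
    refine integral_tsum (fun m => hFmeas m t (hGmeasAll m)) ?_
    have hCu : (∫⁻ s in Set.Ioc (0:ℝ) t, (‖u s‖₊ : ℝ≥0∞)) ≠ ⊤ := by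
      have h1 := (hUint t).2
      simp only [MeasureTheory.HasFiniteIntegral, enorm_norm] at h1
      exact h1.ne
    have hbd : ∀ m, (∫⁻ s in Set.Ioc (0:ℝ) t, (‖S (t-s) (G m s)‖₊ : ℝ≥0∞))
        ≤ ENNReal.ofReal (M * KK m) * ∫⁻ s in Set.Ioc (0:ℝ) t, (‖u s‖₊ : ℝ≥0∞) := by
      intro m
      rw [← lintegral_const_mul' _ _ ENNReal.ofReal_ne_top]
      refine lintegral_mono_ae ((ae_restrict_iff' measurableSet_Ioc).2
        (Eventually.of_forall fun s hs => ?_))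
      have h1 : ‖S (t-s) (G m s)‖ ≤ (M * KK m) * ‖u s‖ := by
        calc ‖S (t-s) (G m s)‖ ≤ ‖S (t-s)‖ * ‖G m s‖ := (S (t-s)).le_opNorm _
          _ ≤ M * (‖u s‖ * KK m) :=
              mul_le_mul (hSb _) (hGball m s hs.1.le) (norm_nonneg _) hM0.le
          _ = (M * KK m) * ‖u s‖ := by ring
      calc (‖S (t-s) (G m s)‖₊ : ℝ≥0∞) = ENNReal.ofReal ‖S (t-s) (G m s)‖ :=
            (ofReal_norm _).symm
        _ ≤ ENNReal.ofReal ((M * KK m) * ‖u s‖) := ENNReal.ofReal_le_ofReal h1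
        _ = ENNReal.ofReal (M * KK m) * ENNReal.ofReal ‖u s‖ :=
            ENNReal.ofReal_mul (mul_nonneg hM0.le (hKK0 m))
        _ = ENNReal.ofReal (M * KK m) * (‖u s‖₊ : ℝ≥0∞) := by
            rw [ofReal_norm, enorm_eq_nnnorm]
    have hMKnn : ∀ m, 0 ≤ M * KK m := fun m => mul_nonneg hM0.le (hKK0 m)
    have hMKsum : Summable fun m => M * KK m := hKKsum.mul_left M
    refine ne_top_of_le_ne_top
      (ENNReal.mul_ne_top (a := ∑' m, ENNReal.ofReal (M * KK m)) ?_ hCu)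
      ((ENNReal.tsum_le_tsum hbd).trans (le_of_eq ENNReal.tsum_mul_right))
    rw [← ENNReal.ofReal_tsum_of_nonneg hMKnn hMKsum]
    exact ENNReal.ofReal_ne_top
  have hptwise : ∀ s ∈ Set.Ioc (0:ℝ) t,
      (∑' m, S (t-s) (G m s))
        = T (t-s) ((∑ i, u s i • N i (∑' m, ζ m s)) + ∑ i, u s i • ψ i) := by
    intro s hs
    have hs0 : (0:ℝ) ≤ s := hs.1.le
    have hsz : Summable fun m => ζ m s := hsummab s hs0
    set L : X →L[ℝ] X := ∑ i, u s i • N i with hLdef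
    have hLapp : ∀ x, L x = ∑ i, u s i • N i x := by
      intro x
      rw [hLdef]
      simp [ContinuousLinearMap.sum_apply, ContinuousLinearMap.smul_apply]
    have hGL : ∀ m, G m s = L (ζ m s) + (if m = 0 then ∑ i, u s i • ψ i else 0) := by
      intro m
      rw [hGdef, hLapp]
    have hsg : Summable fun m => G m s :=
      Summable.of_norm_bounded (hKKsum.mul_left _)
        fun m => hGball m s hs0
    have hszsucc : Summable fun m => ζ (m+1) s := (summable_nat_add_iff 1).2 hsz
    have h2 : (∑' m, G m s) = L (∑' m, ζ m s) + ∑ i, u s i • ψ i := by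
      calc (∑' m, G m s) = G 0 s + ∑' m, G (m+1) s := Summable.tsum_eq_zero_add hsg
        _ = (L (ζ 0 s) + ∑ i, u s i • ψ i) + ∑' m, L (ζ (m+1) s) := by
            rw [hGL 0, if_pos rfl]
            congr 1
            refine tsum_congr fun m => ?_
            rw [hGL (m+1), if_neg (Nat.succ_ne_zero m), add_zero]
        _ = (L (ζ 0 s) + ∑ i, u s i • ψ i) + L (∑' m, ζ (m+1) s) := by
            rw [L.map_tsum hszsucc]
        _ = L (ζ 0 s + ∑' m, ζ (m+1) s) + ∑ i, u s i • ψ i := by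
            rw [map_add]; abel
        _ = L (∑' m, ζ m s) + ∑ i, u s i • ψ i := by
            rw [← Summable.tsum_eq_zero_add hsz]
    calc (∑' m, S (t-s) (G m s)) = S (t-s) (∑' m, G m s) := ((S (t-s)).map_tsum hsg).symm
      _ = T (t-s) ((∑ i, u s i • N i (∑' m, ζ m s)) + ∑ i, u s i • ψ i) := by
          rw [h2, hST t s hs.2, hLapp]
  have hz0t : ζ 0 t = T t φ₀ := by rw [hζdef]; rfl
  calc (∑' m, ζ m t) = ζ 0 t + ∑' m, ζ (m+1) t := Summable.tsum_eq_zero_add (hsummab t ht)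
    _ = T t φ₀ + ∫ s in Set.Ioc (0:ℝ) t, ∑' m, S (t-s) (G m s) := by
        rw [hz0t]
        congr 1
        rw [show (∑' m, ζ (m+1) t) = ∑' m, ∫ s in Set.Ioc (0:ℝ) t, S (t-s) (G m s) from
          tsum_congr hterm, ← hswap]
    _ = T t φ₀ + ∫ s in Set.Ioc (0:ℝ) t,
          T (t-s) ((∑ i, u s i • N i (∑' m, ζ m s)) + ∑ i, u s i • ψ i) := by
        congr 1
        exact setIntegral_congr_fun measurableSet_Ioc hptwise


end
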